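/- A K_{1,3}-free (claw-free) split graph G has a Hamiltonian cycle if and only if G is 2-connected. -/

import Mathlib

open SimpleGraph List

variable {V : Type*}

/-- `I` is an independent set in `G`. -/
def IndepOn (G : SimpleGraph V) (I : Set V) : Prop :=
  ∀ ⦃u⦄, u ∈ I → ∀ ⦃v⦄, v ∈ I → ¬ G.Adj u v

/-- `(K, I)` is a split partition of `G`: `K` a clique, `I` independent,
partitioning the vertex set. -/
def SplitPartition (G : SimpleGraph V) (K I : Set V) : Prop :=
  Disjoint K I ∧ K ∪ I = Set.univ ∧ G.IsClique K ∧ IndepOn G I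

/-- `G` has no induced copy of the star `K_{1,n}` (center plus `n` pairwise
nonadjacent leaves). -/
def StarFree (G : SimpleGraph V) (n : ℕ) : Prop :=
  ¬ ∃ (c : V) (L : Finset V), L.card = n ∧ c ∉ L ∧ (∀ l ∈ L, G.Adj c l) ∧
      (∀ l ∈ L, ∀ m ∈ L, l ≠ m → ¬ G.Adj l m)

/-- `G` is 2-connected: at least 3 vertices and deleting any single vertex
leaves a connected graph. -/
def TwoConnected (G : SimpleGraph V) [Fintype V] : Prop :=
  3 ≤ Fintype.card V ∧ ∀ v : V, (G.induce (({v} : Set V)ᶜ)).Connected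

/-- `G` has a Hamiltonian cycle (a spanning cycle). -/
def HasHamCycle (G : SimpleGraph V) : Prop :=
  letI := Classical.decEq V
  ∃ (a : V) (p : G.Walk a a), p.IsHamiltonianCycle

/- ### Auxiliary infrastructure: cycles as lists -/

/-- A cyclic list: `a :: t` lists the vertices of a cycle of `G` in order. -/
def IsCyc (G : SimpleGraph V) (a : V) (t : List V) : Prop :=
  List.Chain G.Adj a (t ++ [a]) ∧ (a :: t).Nodup ∧ 2 ≤ t.length

section Helpers

variable {G : SimpleGraph V}

lemma chainCons_iff {R : V → V → Prop} {a b : V} {l : List V} :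
    List.Chain R a (b :: l) ↔ R a b ∧ List.Chain R b l := List.isChain_cons_cons

lemma chainSplit_iff {R : V → V → Prop} {a c : V} {l₁ l₂ : List V} :
    List.Chain R a (l₁ ++ c :: l₂) ↔ List.Chain R a (l₁ ++ [c]) ∧ List.Chain R c l₂ :=
  List.isChain_cons_split

lemma chainACC_iff {R : V → V → Prop} {a b c : V} {l₁ l₂ : List V} :
    List.Chain R a (l₁ ++ b :: c :: l₂) ↔
      List.Chain R a (l₁ ++ [b]) ∧ R b c ∧ List.Chain R c l₂ :=
  List.isChain_cons_append_cons_cons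

lemma chain_drop_last {R : V → V → Prop} :
    ∀ (l : List V) (x b : V), List.Chain R x (l ++ [b]) → List.Chain R x l := by
  intro l
  induction l with
  | nil => intro x b _; exact List.Chain.nil
  | cons y l ih =>
      intro x b h
      rw [List.cons_append, chainCons_iff] at h
      exact chainCons_iff.2 ⟨h.1, ih y b h.2⟩

lemma chain_swap_last {R : V → V → Prop} :
    ∀ (l : List V) (x b b' : V), List.Chain R x (l ++ [b]) →
      R ((x :: l).getLast (by simp)) b' → List.Chain R x (l ++ [b']) := by
  intro l
  induction l with
  | nil => intro x b b' _ h2; simpa using chainCons_iff.2 ⟨by simpa using h2, List.Chain.nil⟩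
  | cons y l ih =>
      intro x b b' h h2
      rw [List.cons_append, chainCons_iff] at h ⊢
      exact ⟨h.1, ih y b b' h.2 (by simpa [List.getLast_cons] using h2)⟩

lemma chain_last {R : V → V → Prop} :
    ∀ (l : List V) (x b : V), List.Chain R x (l ++ [b]) →
      R ((x :: l).getLast (by simp)) b := by
  intro l
  induction l with
  | nil => intro x b h; simpa using (chainCons_iff.1 h).1
  | cons y l ih =>
      intro x b h
      rw [List.cons_append, chainCons_iff] at h
      have := ih y b h.2
      simpa [List.getLast_cons] using this

lemma getLast_shape (c x : V) (mm : List V) :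
    (c :: (mm ++ [x])).getLast (by simp) = x := by
  have h1 : (c :: (mm ++ [x])).getLast? = some x := by
    rw [show c :: (mm ++ [x]) = (c :: mm) ++ [x] by simp,
      List.getLast?_append_of_ne_nil _ (by simp)]
    simp
  have h2 : (c :: (mm ++ [x])).getLast? = some ((c :: (mm ++ [x])).getLast (by simp)) :=
    List.getLast?_eq_getLast_of_ne_nil _
  exact Option.some_inj.1 (h2.symm.trans h1)

lemma shape_of_two_le {s : List V} (h : 2 ≤ s.length) :
    ∃ c mm x, s = c :: (mm ++ [x]) := by
  cases s with
  | nil => simp at h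
  | cons c s' =>
      have hne : s' ≠ [] := by
        intro hh
        rw [hh] at h
        simp at h
      obtain ⟨mm, x, hmx⟩ := List.eq_nil_or_concat s' |>.resolve_left hne
      rw [List.concat_eq_append] at hmx
      exact ⟨c, mm, x, by rw [hmx]⟩

lemma isCyc_rotate {a : V} {t₁ t₂ : List V} {k : V} (h : IsCyc G a (t₁ ++ k :: t₂)) :
    IsCyc G k (t₂ ++ a :: t₁) ∧ (k :: (t₂ ++ a :: t₁)) ~ (a :: (t₁ ++ k :: t₂)) := by
  obtain ⟨hch, hnd, hlen⟩ := h
  have hperm : (k :: (t₂ ++ a :: t₁)) ~ (a :: (t₁ ++ k :: t₂)) := by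
    calc k :: (t₂ ++ a :: t₁) ~ k :: (a :: (t₂ ++ t₁)) := (List.perm_middle).cons k
      _ ~ k :: (a :: (t₁ ++ t₂)) := ((List.perm_append_comm).cons a).cons k
      _ ~ a :: (k :: (t₁ ++ t₂)) := List.Perm.swap a k _
      _ ~ a :: (t₁ ++ k :: t₂) := (List.perm_middle).symm.cons a
  have hch' : List.Chain G.Adj a (t₁ ++ k :: (t₂ ++ [a])) := by
    simpa using hch
  rw [chainSplit_iff] at hch'
  refine ⟨⟨?_, hperm.symm.nodup hnd, by simp at hlen ⊢; omega⟩, hperm⟩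
  have : List.Chain G.Adj k (t₂ ++ a :: (t₁ ++ [k])) := by
    rw [chainSplit_iff]
    exact ⟨hch'.2, hch'.1⟩
  simpa using this

lemma isCyc_rot_mem {a k : V} {t : List V} (h : IsCyc G a t) (hk : k ∈ a :: t) :
    ∃ s, IsCyc G k s ∧ (k :: s) ~ (a :: t) := by
  rcases List.mem_cons.1 hk with rfl | hk'
  · exact ⟨t, h, List.Perm.refl _⟩
  · obtain ⟨t₁, t₂, rfl⟩ := List.append_of_mem hk'
    obtain ⟨h1, h2⟩ := isCyc_rotate h
    exact ⟨t₂ ++ a :: t₁, h1, h2⟩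

lemma isCyc_reverse {a : V} {t : List V} (h : IsCyc G a t) : IsCyc G a t.reverse := by
  obtain ⟨hch, hnd, hlen⟩ := h
  refine ⟨?_, by simpa using hnd, by simpa using hlen⟩
  have h1 : List.Chain' G.Adj (a :: (t ++ [a])) := hch
  have h2 : List.Chain' (flip G.Adj) (a :: (t ++ [a])) :=
    List.IsChain.imp (fun x y hxy => hxy.symm) h1
  have h3 : List.Chain' G.Adj ((a :: (t ++ [a])).reverse) := List.isChain_reverse.2 h2
  have heq : (a :: (t ++ [a])).reverse = a :: (t.reverse ++ [a]) := by simp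
  rw [heq] at h3
  exact h3

lemma ins_front {k c u : V} {s : List V} (h : IsCyc G k (c :: s))
    (h1 : G.Adj k u) (h2 : G.Adj u c) (hu : u ∉ k :: c :: s) :
    IsCyc G k (u :: c :: s) := by
  obtain ⟨hch, hnd, hlen⟩ := h
  rw [List.cons_append, chainCons_iff] at hch
  refine ⟨?_, ?_, by simp⟩
  · rw [List.cons_append, chainCons_iff]
    exact ⟨h1, chainCons_iff.2 ⟨h2, hch.2⟩⟩
  · have hp : (k :: u :: c :: s) ~ (u :: k :: c :: s) := List.Perm.swap u k _
    exact hp.symm.nodup (List.nodup_cons.2 ⟨hu, hnd⟩)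

lemma ins_end {k u : V} {s : List V} (h : IsCyc G k s) (hs : s ≠ [])
    (h1 : G.Adj (s.getLast hs) u) (h2 : G.Adj u k) (hu : u ∉ k :: s) :
    IsCyc G k (s ++ [u]) := by
  obtain ⟨hch, hnd, hlen⟩ := h
  obtain ⟨s', x, hsx⟩ := List.eq_nil_or_concat s |>.resolve_left hs
  rw [List.concat_eq_append] at hsx
  subst hsx
  simp only [List.getLast_append] at h1
  refine ⟨?_, ?_, by simp at hlen ⊢⟩
  · have c1 : List.Chain G.Adj k (s' ++ [x]) := chain_drop_last _ _ _ hch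
    have c2 : List.Chain G.Adj k ((s' ++ [x]) ++ u :: [k]) := by
      rw [chainSplit_iff]
      refine ⟨?_, chainCons_iff.2 ⟨h2, List.Chain.nil⟩⟩
      have : List.Chain G.Adj k (s' ++ x :: [u]) := by
        rw [chainSplit_iff]
        exact ⟨c1, chainCons_iff.2 ⟨h1, List.Chain.nil⟩⟩
      simpa using this
    simpa using c2
  · have hp : (k :: (s' ++ [x] ++ [u])) ~ (u :: (k :: (s' ++ [x]))) := by
      calc k :: (s' ++ [x] ++ [u]) ~ k :: (u :: (s' ++ [x])) := by
            refine List.Perm.cons k ?_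
            simpa using (List.perm_append_singleton u (s' ++ [x]))
        _ ~ u :: (k :: (s' ++ [x])) := List.Perm.swap u k _
    exact hp.symm.nodup (List.nodup_cons.2 ⟨hu, hnd⟩)

lemma ins_mid {a x y u : V} {A B : List V} (h : IsCyc G a (A ++ x :: y :: B))
    (h1 : G.Adj x u) (h2 : G.Adj u y) (hu : u ∉ a :: (A ++ x :: y :: B)) :
    IsCyc G a (A ++ x :: u :: y :: B) := by
  obtain ⟨hch, hnd, hlen⟩ := h
  refine ⟨?_, ?_, by simp at hlen ⊢; omega⟩
  · have hsp : List.Chain G.Adj a (A ++ x :: y :: (B ++ [a])) := by simpa using hch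
    rw [chainACC_iff] at hsp
    have : List.Chain G.Adj a (A ++ x :: u :: (y :: B ++ [a])) := by
      rw [chainACC_iff]
      exact ⟨hsp.1, h1, chainCons_iff.2 ⟨h2, hsp.2.2⟩⟩
    simpa using this
  · have hp : (a :: (A ++ x :: u :: y :: B)) ~ (u :: (a :: (A ++ x :: y :: B))) := by
      calc a :: (A ++ x :: u :: y :: B) ~ a :: ((A ++ [x]) ++ u :: (y :: B)) := by simp
        _ ~ a :: (u :: ((A ++ [x]) ++ y :: B)) := (List.perm_middle).cons a
        _ ~ u :: (a :: ((A ++ [x]) ++ y :: B)) := List.Perm.swap u a _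
        _ ~ u :: (a :: (A ++ x :: y :: B)) := by simp
    exact hp.symm.nodup (List.nodup_cons.2 ⟨hu, hnd⟩)

lemma surgA {k1 k2 u y : V} {A' B : List V} (h : IsCyc G k1 (y :: A' ++ k2 :: B)) (hB : B ≠ [])
    (h1 : G.Adj k2 u) (h2 : G.Adj u k1) (h3 : G.Adj k1 (B.head hB))
    (h4 : G.Adj (B.getLast hB) y) (hu : u ∉ k1 :: (y :: A' ++ k2 :: B)) :
    IsCyc G y (A' ++ k2 :: u :: k1 :: B) := by
  obtain ⟨hch, hnd, hlen⟩ := h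
  obtain ⟨hb, B', rfl⟩ : ∃ hb B', B = hb :: B' := by
    cases B with
    | nil => exact absurd rfl hB
    | cons hb B' => exact ⟨hb, B', rfl⟩
  have hch' : List.Chain G.Adj k1 (y :: (A' ++ k2 :: (hb :: B' ++ [k1]))) := by simpa using hch
  rw [chainCons_iff] at hch'
  have hsp := (chainSplit_iff).1 hch'.2
  have hAk2 : List.Chain G.Adj y (A' ++ [k2]) := hsp.1
  have hk2 := chainCons_iff.1 hsp.2
  have hlastB : List.Chain G.Adj hb (B' ++ [y]) :=
    chain_swap_last B' hb k1 y hk2.2 (by simpa using h4)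
  constructor
  · have : List.Chain G.Adj y (A' ++ k2 :: (u :: k1 :: hb :: (B' ++ [y]))) := by
      rw [chainSplit_iff]
      refine ⟨hAk2, chainCons_iff.2 ⟨h1, chainCons_iff.2 ⟨h2,
        chainCons_iff.2 ⟨by simpa using h3, hlastB⟩⟩⟩⟩
    simpa using this
  refine ⟨?_, by simp at hlen ⊢; omega⟩
  have hp : (y :: (A' ++ k2 :: u :: k1 :: hb :: B')) ~
      (u :: (k1 :: (y :: A' ++ k2 :: hb :: B'))) := by
    calc y :: (A' ++ k2 :: u :: k1 :: hb :: B')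
        ~ (y :: A' ++ [k2]) ++ u :: (k1 :: hb :: B') := by simp
      _ ~ u :: ((y :: A' ++ [k2]) ++ k1 :: hb :: B') := List.perm_middle
      _ ~ u :: (k1 :: ((y :: A' ++ [k2]) ++ hb :: B')) := (List.perm_middle).cons u
      _ ~ u :: (k1 :: (y :: A' ++ k2 :: hb :: B')) := by simp
  exact hp.symm.nodup (List.nodup_cons.2 ⟨hu, hnd⟩)

lemma surgB {k1 k2 u y : V} {A' B : List V} (h : IsCyc G k1 (y :: A' ++ k2 :: B)) (hB : B ≠ [])
    (h1 : G.Adj ((y :: A').getLast (by simp)) k1) (h2 : G.Adj k1 u) (h3 : G.Adj u k2)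
    (h4 : G.Adj (B.getLast hB) y) (hu : u ∉ k1 :: (y :: A' ++ k2 :: B)) :
    IsCyc G y (A' ++ k1 :: u :: k2 :: B) := by
  obtain ⟨hch, hnd, hlen⟩ := h
  obtain ⟨hb, B', rfl⟩ : ∃ hb B', B = hb :: B' := by
    cases B with
    | nil => exact absurd rfl hB
    | cons hb B' => exact ⟨hb, B', rfl⟩
  have hch' : List.Chain G.Adj k1 (y :: (A' ++ k2 :: (hb :: B' ++ [k1]))) := by simpa using hch
  rw [chainCons_iff] at hch'
  have hsp := (chainSplit_iff).1 hch'.2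
  have hAk2 : List.Chain G.Adj y (A' ++ [k2]) := hsp.1
  have hk2 := chainCons_iff.1 hsp.2
  have hlastB : List.Chain G.Adj hb (B' ++ [y]) :=
    chain_swap_last B' hb k1 y hk2.2 (by simpa using h4)
  have hAk1 : List.Chain G.Adj y (A' ++ [k1]) :=
    chain_swap_last A' y k2 k1 hAk2 h1
  constructor
  · have : List.Chain G.Adj y (A' ++ k1 :: (u :: k2 :: hb :: (B' ++ [y]))) := by
      rw [chainSplit_iff]
      exact ⟨hAk1, chainCons_iff.2 ⟨h2, chainCons_iff.2 ⟨h3,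
        chainCons_iff.2 ⟨hk2.1, hlastB⟩⟩⟩⟩
    simpa using this
  refine ⟨?_, by simp at hlen ⊢; omega⟩
  have hp : (y :: (A' ++ k1 :: u :: k2 :: hb :: B')) ~
      (u :: (k1 :: (y :: A' ++ k2 :: hb :: B'))) := by
    calc y :: (A' ++ k1 :: u :: k2 :: hb :: B')
        ~ (y :: A') ++ k1 :: (u :: k2 :: hb :: B') := by simp
      _ ~ k1 :: ((y :: A') ++ u :: k2 :: hb :: B') := List.perm_middle
      _ ~ k1 :: (u :: ((y :: A') ++ k2 :: hb :: B')) := (List.perm_middle).cons k1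
      _ ~ u :: (k1 :: ((y :: A') ++ k2 :: hb :: B')) := List.Perm.swap u k1 _
      _ ~ u :: (k1 :: (y :: A' ++ k2 :: hb :: B')) := by simp
  exact hp.symm.nodup (List.nodup_cons.2 ⟨hu, hnd⟩)

/-- edge list of the walk along `x :: s ++ [b]` -/
def Elist (x : V) : List V → V → List (Sym2 V)
  | [], b => [s(x, b)]
  | y :: s, b => s(x, y) :: Elist y s b

lemma walk_of_chain :
    ∀ (s : List V) (x b : V), List.Chain G.Adj x (s ++ [b]) →
      ∃ p : G.Walk x b, p.support = x :: (s ++ [b]) ∧ p.edges = Elist x s b := by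
  intro s
  induction s with
  | nil =>
      intro x b h
      rw [List.nil_append, chainCons_iff] at h
      exact ⟨SimpleGraph.Walk.cons h.1 SimpleGraph.Walk.nil, by simp, by simp [Elist]⟩
  | cons y s ih =>
      intro x b h
      rw [List.cons_append, chainCons_iff] at h
      obtain ⟨p, hp1, hp2⟩ := ih y b h.2
      exact ⟨SimpleGraph.Walk.cons h.1 p, by simp [hp1], by simp [hp2, Elist]⟩

lemma elist_mem {a c : V} :
    ∀ (s : List V) (x b : V), a ∉ x :: s → s(a, c) ∈ Elist x s b →
      b = a ∧ c = (x :: s).getLast (by simp) := by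
  intro s
  induction s with
  | nil =>
      intro x b ha h
      simp only [Elist, List.mem_singleton] at h
      rw [Sym2.eq_iff] at h
      rcases h with ⟨rfl, rfl⟩ | ⟨rfl, rfl⟩
      · simp at ha
      · simp
  | cons y s ih =>
      intro x b ha h
      simp only [Elist, List.mem_cons] at h
      rcases h with h | h
      · rw [Sym2.eq_iff] at h
        rcases h with ⟨rfl, rfl⟩ | ⟨rfl, rfl⟩
        · simp at ha
        · simp at ha
      · have := ih y b (fun hm => ha (List.mem_cons_of_mem x hm)) h
        exact ⟨this.1, this.2.trans (List.getLast_cons (by simp)).symm⟩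

theorem isCyc_hamCycle {a : V} {t : List V} (h : IsCyc G a t) (hspan : ∀ v, v ∈ a :: t) :
    ∃ p : G.Walk a a, letI := Classical.decEq V; p.IsHamiltonianCycle := by
  letI := Classical.decEq V
  obtain ⟨hch, hnd, hlen⟩ := h
  obtain ⟨c, t', rfl⟩ : ∃ c t', t = c :: t' := by
    cases t with
    | nil => simp at hlen
    | cons c t' => exact ⟨c, t', rfl⟩
  rw [List.cons_append, chainCons_iff] at hch
  obtain ⟨q, hq1, hq2⟩ := walk_of_chain t' c a hch.2
  refine ⟨SimpleGraph.Walk.cons hch.1 q, ?_⟩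
  have hnd' : (a :: c :: t').Nodup := hnd
  have hand : a ∉ c :: t' := (List.nodup_cons.1 hnd').1
  have hct : (c :: t').Nodup := (List.nodup_cons.1 hnd').2
  have hqpath : q.IsPath := by
    rw [SimpleGraph.Walk.isPath_def, hq1]
    have hp : (c :: (t' ++ [a])) ~ (a :: c :: t') := by
      calc c :: (t' ++ [a]) ~ c :: (a :: t') := (List.perm_append_singleton a t').cons c
        _ ~ a :: c :: t' := List.Perm.swap a c _
    exact hp.symm.nodup hnd'
  have hedge : s(a, c) ∉ q.edges := by
    rw [hq2]
    intro hmem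
    have := elist_mem t' c a hand hmem
    have hc : c = (c :: t').getLast (by simp) := this.2
    cases t' with
    | nil => simp at hlen
    | cons d t'' =>
        rw [List.getLast_cons (by simp)] at hc
        have : c ∈ d :: t'' := hc ▸ List.getLast_mem (by simp)
        exact (List.nodup_cons.1 hct).1 this
  have hcyc : (SimpleGraph.Walk.cons hch.1 q).IsCycle :=
    (SimpleGraph.Walk.cons_isCycle_iff q hch.1).2 ⟨hqpath, hedge⟩
  rw [SimpleGraph.Walk.isHamiltonianCycle_iff_isCycle_and_support_count_tail_eq_one]
  refine ⟨hcyc, ?_⟩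
  intro v
  have hsup : (SimpleGraph.Walk.cons hch.1 q).support = a :: c :: (t' ++ [a]) := by simp [hq1]
  rw [hsup]
  simp only [List.tail_cons]
  rcases eq_or_ne v a with rfl | hva
  · rw [show c :: (t' ++ [v]) = (c :: t') ++ [v] by simp, List.count_append]
    simp [List.count_eq_zero_of_not_mem (show v ∉ c :: t' from hand)]
  · have hv : v ∈ c :: t' := by
      have := hspan v
      rcases List.mem_cons.1 this with rfl | h
      · exact absurd rfl hva
      · exact h
    rw [show c :: (t' ++ [a]) = (c :: t') ++ [a] by simp, List.count_append]
    rw [List.count_eq_one_of_mem hct hv]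
    simp [hva, List.count_eq_zero]

theorem hamCycle_isCyc [Fintype V] {a : V} (p : G.Walk a a)
    (hp : letI := Classical.decEq V; p.IsHamiltonianCycle) :
    ∃ t, IsCyc G a t ∧ (∀ v, v ∈ a :: t) ∧ t.length + 1 = Fintype.card V := by
  letI := Classical.decEq V
  have hcount : ∀ v, p.support.tail.count v = 1 :=
    (SimpleGraph.Walk.isHamiltonianCycle_iff_isCycle_and_support_count_tail_eq_one.1 hp).2
  have hcyc := hp.isCycle
  set m := p.support.tail with hm
  have hmem : ∀ v, v ∈ m := fun v => List.count_pos_iff.1 (by rw [hcount v]; omega)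
  have hnodupm : m.Nodup := List.nodup_iff_count_le_one.2 (fun v => le_of_eq (hcount v))
  have hmne : m ≠ [] := List.ne_nil_of_mem (hmem a)
  have hlast : m.getLast hmne = a := by
    have h1 : p.support.getLast? = some a := by
      rw [List.getLast?_eq_getLast_of_ne_nil p.support_ne_nil]
      exact congrArg some p.getLast_support
    have h2 : p.support = a :: m := p.support_eq_cons
    rw [h2] at h1
    have h3 : (a :: m).getLast? = some (m.getLast hmne) := by
      rw [List.getLast?_eq_getLast_of_ne_nil (by simp), List.getLast_cons hmne]
    rw [h3] at h1
    exact Option.some_inj.1 h1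
  have hchain : List.Chain G.Adj a m := by
    have := p.isChain_adj_support
    rw [p.support_eq_cons] at this
    exact this
  set t := m.dropLast with ht
  have hmt : m = t ++ [a] := by
    conv_lhs => rw [← List.dropLast_append_getLast hmne]
    rw [hlast]
  have hat : a ∉ t := by
    intro hmem'
    rw [hmt] at hnodupm
    exact (List.disjoint_of_nodup_append hnodupm) hmem' (by simp)
  have hndt : t.Nodup := by
    rw [hmt] at hnodupm
    exact (List.nodup_append.1 hnodupm).1
  have hlenm : m.length = Fintype.card V := by
    have h1 : m.toFinset = Finset.univ := by
      ext v; simp [hmem v]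
    have h2 := List.toFinset_card_of_nodup hnodupm
    rw [h1] at h2
    simpa [Finset.card_univ] using h2.symm
  have hlen3 : 3 ≤ p.length := hcyc.three_le_length
  have hplen : p.length = m.length := by
    have h := p.length_support
    rw [p.support_eq_cons, List.length_cons] at h
    rw [← hm] at h
    omega
  refine ⟨t, ⟨by rwa [hmt] at hchain, List.nodup_cons.2 ⟨hat, hndt⟩, ?_⟩, ?_, ?_⟩
  · have : m.length = t.length + 1 := by rw [hmt]; simp
    omega
  · intro v
    have := hmem v
    rw [hmt] at this
    rcases List.mem_append.1 this with h | h
    · exact List.mem_cons_of_mem a h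
    · simp at h; simp [h]
  · have : m.length = t.length + 1 := by rw [hmt]; simp
    omega

lemma reach_of_chain {S : Set V} :
    ∀ (l : List V) (x : V) (hx : x ∈ S), List.Chain G.Adj x l → (∀ w ∈ l, w ∈ S) →
      ∀ z (hz : z ∈ S), z ∈ l → (G.induce S).Reachable ⟨x, hx⟩ ⟨z, hz⟩ := by
  intro l
  induction l with
  | nil => intro x hx _ _ z hz hmem; simp at hmem
  | cons y l ih =>
      intro x hx hch hmemS z hz hmem
      rw [chainCons_iff] at hch
      have hyS : y ∈ S := hmemS y (by simp)
      have hadj : (G.induce S).Adj ⟨x, hx⟩ ⟨y, hyS⟩ := hch.1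
      rcases List.mem_cons.1 hmem with rfl | hmem'
      · exact hadj.reachable
      · exact hadj.reachable.trans
          (ih y hyS hch.2 (fun w hw => hmemS w (List.mem_cons_of_mem y hw)) z hz hmem')

/-- claw-free helper -/
lemma noClaw {G : SimpleGraph V} (hclaw : StarFree G 3) {c x y z : V} (hcx : G.Adj c x)
    (hcy : G.Adj c y) (hcz : G.Adj c z) (hxy : x ≠ y) (hxz : x ≠ z) (hyz : y ≠ z)
    (nxy : ¬ G.Adj x y) (nxz : ¬ G.Adj x z) (nyz : ¬ G.Adj y z) : False := by
  classical
  apply hclaw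
  refine ⟨c, {x, y, z}, ?_, ?_, ?_, ?_⟩
  · rw [Finset.card_insert_of_notMem (by simp [hxy, hxz]),
      Finset.card_insert_of_notMem (by simp [hyz])]
    simp
  · simp only [Finset.mem_insert, Finset.mem_singleton]
    push_neg
    exact ⟨fun h => G.irrefl (h ▸ hcx), fun h => G.irrefl (h ▸ hcy), fun h => G.irrefl (h ▸ hcz)⟩
  · intro l hl
    simp only [Finset.mem_insert, Finset.mem_singleton] at hl
    rcases hl with rfl | rfl | rfl <;> assumption
  · intro l hl m hm hne
    simp only [Finset.mem_insert, Finset.mem_singleton] at hl hm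
    rcases hl with rfl | rfl | rfl <;> rcases hm with rfl | rfl | rfl <;>
      first
        | exact absurd rfl hne
        | assumption
        | (intro hadj; exact nxy hadj.symm)
        | (intro hadj; exact nxz hadj.symm)
        | (intro hadj; exact nyz hadj.symm)

end Helpers

/-- A claw-free (`K_{1,3}`-free) split graph has a Hamiltonian cycle iff it is
2-connected. -/
theorem clawfree_split_hamiltonian_iff_twoConnected [Fintype V]
    (G : SimpleGraph V) (K I : Set V) (hsplit : SplitPartition G K I)
    (hclaw : StarFree G 3) :
    HasHamCycle G ↔ TwoConnected G := by
  classical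
  obtain ⟨hdisj, huniv, hclique, hindep⟩ := hsplit
  have hKI : ∀ v : V, v ∈ K ∨ v ∈ I := fun v => by
    have : v ∈ K ∪ I := by rw [huniv]; trivial
    exact this
  constructor
  · -- Hamiltonian → 2-connected
    rintro ⟨a, p, hp⟩
    obtain ⟨t, hcyc, hspan, hcard⟩ := hamCycle_isCyc p hp
    have hlen2 : 2 ≤ t.length := hcyc.2.2
    constructor
    · omega
    · intro v
      obtain ⟨s, hcs, hperm⟩ := isCyc_rot_mem hcyc (hspan v)
      obtain ⟨hch, hnd, hlen⟩ := hcs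
      obtain ⟨w0, s', rfl⟩ : ∃ w0 s', s = w0 :: s' := by
        cases s with
        | nil => simp at hlen
        | cons w0 s' => exact ⟨w0, s', rfl⟩
      rw [List.cons_append, chainCons_iff] at hch
      have hchs' : List.Chain G.Adj w0 s' := chain_drop_last _ _ _ hch.2
      have hmemS : ∀ w ∈ w0 :: s', w ∈ ({v} : Set V)ᶜ := by
        intro w hw
        simp only [Set.mem_compl_iff, Set.mem_singleton_iff]
        intro hwv
        subst hwv
        exact (List.nodup_cons.1 hnd).1 hw
      have hw0S : w0 ∈ ({v} : Set V)ᶜ := hmemS w0 (by simp)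
      rw [SimpleGraph.connected_iff]
      refine ⟨?_, ⟨⟨w0, hw0S⟩⟩⟩
      rintro ⟨x, hx⟩ ⟨z, hz⟩
      have hmem : ∀ (y : V), y ∈ ({v} : Set V)ᶜ → y ∈ w0 :: s' := by
        intro y hy
        simp only [Set.mem_compl_iff, Set.mem_singleton_iff] at hy
        have : y ∈ v :: w0 :: s' := hperm.mem_iff.2 (hspan y)
        rcases List.mem_cons.1 this with rfl | h
        · exact absurd rfl hy
        · exact h
      have key : ∀ (y : V) (hy : y ∈ ({v} : Set V)ᶜ),
          (G.induce (({v} : Set V)ᶜ)).Reachable ⟨w0, hw0S⟩ ⟨y, hy⟩ := by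
        intro y hy
        rcases List.mem_cons.1 (hmem y hy) with rfl | h
        · rfl
        · exact reach_of_chain s' w0 hw0S hchs'
            (fun w hw => hmemS w (List.mem_cons_of_mem w0 hw)) y hy h
      exact (key x hx).symm.trans (key z hz)
  · -- 2-connected → Hamiltonian
    rintro ⟨hcard, hconn⟩
    have hKadj : ∀ x ∈ K, ∀ y ∈ K, x ≠ y → G.Adj x y := fun x hx y hy hne => hclique hx hy hne
    have hnI : ∀ {x y : V}, G.Adj x y → x ∈ I → y ∈ K := by
      intro x y hxy hx
      rcases hKI y with h | h
      · exact h
      · exact absurd hxy (hindep hx h)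
    have hnontriv : Nontrivial V := Fintype.one_lt_card_iff_nontrivial.1 (by omega)
    have hthird : ∀ x y : V, ∃ z, z ≠ x ∧ z ≠ y := by
      intro x y
      by_contra hcon
      push_neg at hcon
      have hsub : (Finset.univ : Finset V) ⊆ {x, y} := by
        intro z _
        simp only [Finset.mem_insert, Finset.mem_singleton]
        rcases eq_or_ne z x with h | h
        · exact Or.inl h
        · exact Or.inr (hcon z h)
      have hc2 := Finset.card_le_card hsub
      have hxy2 : ({x, y} : Finset V).card ≤ 2 :=
        (Finset.card_insert_le x {y}).trans (by simp)
      rw [Finset.card_univ] at hc2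
      omega
    have hnbr_ne : ∀ v w : V, v ≠ w → ∃ y, G.Adj v y ∧ y ≠ w := by
      intro v w hvw
      obtain ⟨z, hzv, hzw⟩ := hthird v w
      have hconn' := (SimpleGraph.connected_iff _).1 (hconn w)
      have hvS : v ∈ ({w} : Set V)ᶜ := by simp [hvw]
      have hzS : z ∈ ({w} : Set V)ᶜ := by simp [hzw]
      obtain ⟨q⟩ := hconn'.1 ⟨v, hvS⟩ ⟨z, hzS⟩
      cases q with
      | nil => exact absurd rfl hzv
      | cons hadj q' =>
          rename_i b
          exact ⟨b.1, hadj, b.2⟩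
    have hdeg2 : ∀ v : V, ∃ y z, y ≠ z ∧ G.Adj v y ∧ G.Adj v z := by
      intro v
      obtain ⟨w, hw⟩ := exists_ne v
      obtain ⟨y, hy, hyw⟩ := hnbr_ne v w (Ne.symm hw)
      obtain ⟨z, hz, hzy⟩ := hnbr_ne v y hy.ne
      exact ⟨z, y, hzy, hz, hy⟩
    -- existence of a cycle
    have hex : ∃ a t, IsCyc G a t := by
      rcases Set.eq_empty_or_nonempty I with hIe | ⟨i, hi⟩
      · obtain ⟨x, y, hxy⟩ := exists_pair_ne V
        obtain ⟨z, hzx, hzy⟩ := hthird x y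
        have hK3 : ∀ v : V, v ∈ K := fun v => (hKI v).resolve_right (by simp [hIe])
        refine ⟨x, [y, z], ?_, ?_, by simp⟩
        · exact chainCons_iff.2 ⟨hKadj x (hK3 x) y (hK3 y) hxy,
            chainCons_iff.2 ⟨hKadj y (hK3 y) z (hK3 z) (Ne.symm hzy),
              chainCons_iff.2 ⟨hKadj z (hK3 z) x (hK3 x) hzx, List.Chain.nil⟩⟩⟩
        · simp [hxy, Ne.symm hzx, Ne.symm hzy]
      · obtain ⟨y, z, hyz, hy, hz⟩ := hdeg2 i
        have hyK := hnI hy hi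
        have hzK := hnI hz hi
        refine ⟨i, [y, z], ?_, ?_, by simp⟩
        · exact chainCons_iff.2 ⟨hy,
            chainCons_iff.2 ⟨hKadj y hyK z hzK hyz,
              chainCons_iff.2 ⟨hz.symm, List.Chain.nil⟩⟩⟩
        · simp [hy.ne, hz.ne, hyz]
    -- a maximum cycle
    obtain ⟨a, t, hcyc, hlen_eq⟩ :
        ∃ a t, IsCyc G a t ∧ (a :: t).length = sSup {n | ∃ a t, IsCyc G a t ∧ (a :: t).length = n} := by
      have hSne : Set.Nonempty {n | ∃ a t, IsCyc G a t ∧ (a :: t).length = n} := by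
        obtain ⟨a, t, h⟩ := hex
        exact ⟨(a :: t).length, a, t, h, rfl⟩
      have hSbdd : BddAbove {n | ∃ a t, IsCyc G a t ∧ (a :: t).length = n} := by
        refine ⟨Fintype.card V, ?_⟩
        rintro n ⟨a, t, hc, rfl⟩
        exact hc.2.1.length_le_card
      obtain ⟨a, t, hc, hl⟩ := Nat.sSup_mem hSne hSbdd
      exact ⟨a, t, hc, hl⟩
    have hmax : ∀ b s, IsCyc G b s → (b :: s).length ≤ (a :: t).length := by
      intro b s h
      rw [hlen_eq]
      refine le_csSup ?_ ⟨b, s, h, rfl⟩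
      refine ⟨Fintype.card V, ?_⟩
      rintro n ⟨a', t', hc, rfl⟩
      exact hc.2.1.length_le_card
    have hlonger : ∀ (b : V) (s' : List V), IsCyc G b s' →
        (a :: t).length < (b :: s').length → False := by
      intro b s' h hlt
      exact absurd (hmax b s' h) (by omega)
    -- every K-vertex lies on the maximum cycle
    have hKins : ∀ w, w ∈ K → w ∈ a :: t := by
      intro w hwK
      by_contra hw
      obtain ⟨c0, mm0, x0, hshape0⟩ := shape_of_two_le hcyc.2.2
      have hac0 : G.Adj a c0 := by
        have := hcyc.1
        rw [hshape0, List.cons_append, chainCons_iff] at this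
        exact this.1
      have hkex : ∃ k, k ∈ a :: t ∧ k ∈ K := by
        rcases hKI a with h | h
        · exact ⟨a, by simp, h⟩
        · rcases hKI c0 with h' | h'
          · exact ⟨c0, by simp [hshape0], h'⟩
          · exact absurd hac0 (hindep h h')
      obtain ⟨k, hkmem, hkK⟩ := hkex
      obtain ⟨s, hcs, hperm⟩ := isCyc_rot_mem hcyc hkmem
      obtain ⟨c, mm, x, rfl⟩ := shape_of_two_le hcs.2.2
      have hwmem : w ∉ k :: (c :: (mm ++ [x])) := fun h => hw (hperm.mem_iff.1 h)
      have hkc : G.Adj k c := by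
        have := hcs.1
        rw [List.cons_append, chainCons_iff] at this
        exact this.1
      have hxk : G.Adj x k := by
        have := chain_last _ _ _ hcs.1
        rwa [show ((k :: (c :: (mm ++ [x]))).getLast (by simp)) = x by
          rw [List.getLast_cons (by simp)]; exact getLast_shape c x mm] at this
      have hckK : G.Adj k w := hKadj k hkK w hwK (fun h => hwmem (by rw [h]; exact List.mem_cons_self))
      have hcmem : c ∈ k :: (c :: (mm ++ [x])) := by simp
      have hxmem : x ∈ k :: (c :: (mm ++ [x])) := by simp
      have hnd := hcs.2.1
      have hcx : c ≠ x := by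
        have h1 : (c :: (mm ++ [x])).Nodup := (List.nodup_cons.1 hnd).2
        have h2 : c ∉ mm ++ [x] := (List.nodup_cons.1 h1).1
        intro h
        exact h2 (by simp [h])
      have hgrow_front : G.Adj w c → False := by
        intro hwc
        have hnew := ins_front hcs hckK hwc hwmem
        refine hlonger k _ hnew ?_
        rw [← hperm.length_eq]
        simp
      have hgrow_end : G.Adj x w → False := by
        intro hxw
        have hnew := ins_end hcs (by simp) (by rw [getLast_shape c x mm]; exact hxw)
          (hKadj w hwK k hkK (fun h => hwmem (by rw [← h]; exact List.mem_cons_self))) hwmem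
        refine hlonger k _ hnew ?_
        rw [← hperm.length_eq]
        simp
      rcases hKI c with hcK | hcI
      · exact hgrow_front (hKadj w hwK c hcK (fun h => hwmem (by simp [h])))
      rcases hKI x with hxK | hxI
      · exact hgrow_end (hKadj x hxK w hwK (fun h => hwmem (by simp [← h])))
      by_cases hwc : G.Adj w c
      · exact hgrow_front hwc
      by_cases hwx : G.Adj x w
      · exact hgrow_end hwx
      exact noClaw hclaw hkc (hxk.symm) hckK hcx
        (fun h => hwmem (by simp [h])) (fun h => hwmem (by simp [h]))
        (hindep hcI hxI) (fun h => hwc h.symm) hwx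
    -- the maximum cycle spans
    have hspan : ∀ v, v ∈ a :: t := by
      intro u
      by_contra hu
      have huI : u ∈ I := (hKI u).resolve_left (fun h => hu (hKins u h))
      obtain ⟨k1, k2, hk12, hy, hz⟩ := hdeg2 u
      have hk1K : k1 ∈ K := hnI hy huI
      have hk2K : k2 ∈ K := hnI hz huI
      obtain ⟨s0, hcs0, hperm0⟩ := isCyc_rot_mem hcyc (hKins k1 hk1K)
      -- main argument, for a rotated cycle with last entry in K
      have hmain : ∀ s, IsCyc G k1 s → ((k1 :: s) ~ (a :: t)) →
          ∀ c mm x, s = c :: (mm ++ [x]) → x ∈ K → ¬G.Adj u c → ¬G.Adj u x → False := by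
        intro s hcs hperm c mm x hsx hxK hnc hnx
        subst hsx
        have humem : u ∉ k1 :: (c :: (mm ++ [x])) := fun h => hu (hperm.mem_iff.1 h)
        have hnd := hcs.2.1
        have hk1c : G.Adj k1 c := by
          have := hcs.1
          rw [List.cons_append, chainCons_iff] at this
          exact this.1
        have hxk1 : G.Adj x k1 := by
          have := chain_last _ _ _ hcs.1
          rwa [show ((k1 :: (c :: (mm ++ [x]))).getLast (by simp)) = x by
            rw [List.getLast_cons (by simp)]; exact getLast_shape c x mm] at this
        have hcx : c ≠ x := by
          have h1 : (c :: (mm ++ [x])).Nodup := (List.nodup_cons.1 hnd).2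
          have h2 : c ∉ mm ++ [x] := (List.nodup_cons.1 h1).1
          intro h
          exact h2 (by simp [h])
        have hadjxc : G.Adj x c := by
          rcases hKI c with hcK | hcI
          · exact hKadj x hxK c hcK (Ne.symm hcx)
          · by_contra hcon
            exact noClaw hclaw hk1c (hxk1.symm) (hy.symm) hcx
              (fun h => humem (by simp [h])) (fun h => humem (by simp [h]))
              (fun h => hcon h.symm) (fun h => hnc h.symm) (fun h => hnx h.symm)
        have hk2mem : k2 ∈ k1 :: (c :: (mm ++ [x])) := hperm.mem_iff.2 (hKins k2 hk2K)
        have hk2s : k2 ∈ c :: (mm ++ [x]) := by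
          rcases List.mem_cons.1 hk2mem with h | h
          · exact absurd h.symm hk12
          · exact h
        have hk2c : k2 ≠ c := fun h => hnc (h ▸ hz)
        have hk2x : k2 ≠ x := fun h => hnx (h ▸ hz)
        obtain ⟨A, B, hAB⟩ := List.append_of_mem hk2s
        obtain ⟨A', rfl⟩ : ∃ A', A = c :: A' := by
          cases A with
          | nil =>
              rw [List.nil_append] at hAB
              injection hAB with h1 h2
              exact absurd h1.symm hk2c
          | cons a0 A' =>
              injection hAB with h1 h2
              exact ⟨A', by rw [h1]⟩
        rw [List.cons_append] at hAB
        injection hAB with _ hmx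
        have hB : B ≠ [] := by
          rintro rfl
          have hgl := congrArg List.getLast? hmx
          rw [List.getLast?_append_of_ne_nil _ (by simp : ([x] : List V) ≠ []),
            List.getLast?_append_of_ne_nil _ (by simp : ([k2] : List V) ≠ [])] at hgl
          simp at hgl
          exact hk2x hgl.symm
        obtain ⟨b0, B', rfl⟩ : ∃ b0 B', B = b0 :: B' := by
          cases B with
          | nil => exact absurd rfl hB
          | cons b0 B' => exact ⟨b0, B', rfl⟩
        have hxBlast : (b0 :: B').getLast (by simp) = x := by
          have h1 : (mm ++ [x]).getLast? = some x := by
            rw [List.getLast?_append_of_ne_nil _ (by simp : ([x] : List V) ≠ [])]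
            simp
          rw [hmx, List.getLast?_append_of_ne_nil _ (by simp : (k2 :: b0 :: B') ≠ []),
            List.getLast?_cons_cons,
            List.getLast?_eq_getLast_of_ne_nil (by simp : (b0 :: B') ≠ [])] at h1
          exact Option.some_inj.1 h1
        rw [hmx] at hcs humem hnd
        have hmxlen := congrArg List.length hmx
        simp only [List.length_append, List.length_cons, List.length_nil] at hmxlen
        have hlencyc := hperm.length_eq
        simp only [List.length_cons, List.length_append, List.length_nil] at hlencyc
        have hfull : List.Chain G.Adj k1 ((c :: A') ++ k2 :: ((b0 :: B') ++ [k1])) := by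
          have := hcs.1
          simpa using this
        rw [chainSplit_iff] at hfull
        have hlAk2 : G.Adj ((c :: A').getLast (by simp)) k2 := by
          have := chain_last _ _ _ hfull.1
          rwa [List.getLast_cons (by simp : (c :: A') ≠ [])] at this
        have hk2b0 : G.Adj k2 b0 := (chainCons_iff.1 hfull.2).1
        set lA := (c :: A').getLast (by simp : (c :: A') ≠ []) with hlAdef
        have hlAmem : lA ∈ c :: A' := List.getLast_mem _
        have hlAcyc : lA ∈ k1 :: (c :: (A' ++ k2 :: (b0 :: B'))) :=
          List.mem_cons_of_mem k1 (by
            rw [show c :: (A' ++ k2 :: (b0 :: B')) = (c :: A') ++ k2 :: (b0 :: B') by simp]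
            exact List.mem_append_left _ hlAmem)
        have hb0cyc : b0 ∈ k1 :: (c :: (A' ++ k2 :: (b0 :: B'))) := by simp
        have hulA : u ≠ lA := fun h => humem (h ▸ hlAcyc)
        have hub0 : u ≠ b0 := fun h => humem (h ▸ hb0cyc)
        have hk1notin : k1 ∉ c :: (A' ++ k2 :: (b0 :: B')) := (List.nodup_cons.1 hnd).1
        have hk1lA : k1 ≠ lA := by
          intro h
          apply hk1notin
          rw [h, show c :: (A' ++ k2 :: (b0 :: B')) = (c :: A') ++ k2 :: (b0 :: B') by simp]
          exact List.mem_append_left _ hlAmem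
        have hk1b0 : k1 ≠ b0 := by
          intro h
          exact hk1notin (by simp [h])
        have hlAb0 : lA ≠ b0 := by
          have hnd2 : ((c :: A') ++ k2 :: (b0 :: B')).Nodup := by
            have := (List.nodup_cons.1 hnd).2
            simpa using this
          have hdisj := List.disjoint_of_nodup_append hnd2
          intro h
          exact (hdisj hlAmem) (by simp [h])
        have hnulA : ¬ G.Adj u lA := by
          intro hadj
          have hA0 : (c :: A').dropLast ++ [lA] = c :: A' :=
            List.dropLast_append_getLast (by simp)
          have hcs3 : IsCyc G k1 ((c :: A').dropLast ++ lA :: k2 :: (b0 :: B')) := by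
            have heq : c :: (A' ++ k2 :: (b0 :: B')) =
                (c :: A').dropLast ++ lA :: k2 :: (b0 :: B') := by
              rw [show (c :: A').dropLast ++ lA :: k2 :: (b0 :: B') =
                ((c :: A').dropLast ++ [lA]) ++ k2 :: (b0 :: B') by simp, hA0]
              simp
            rw [← heq]
            exact hcs
          have humem3 : u ∉ k1 :: ((c :: A').dropLast ++ lA :: k2 :: (b0 :: B')) := by
            intro h
            apply humem
            rcases List.mem_cons.1 h with rfl | hp1
            · exact List.mem_cons_self
            · refine List.mem_cons_of_mem k1 ?_
              rw [show c :: (A' ++ k2 :: (b0 :: B')) =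
                ((c :: A').dropLast ++ [lA]) ++ k2 :: (b0 :: B') by rw [hA0]; simp]
              rcases List.mem_append.1 hp1 with hb2 | hb2
              · exact List.mem_append_left _ (List.mem_append_left _ hb2)
              · rcases List.mem_cons.1 hb2 with rfl | hb3
                · exact List.mem_append_left _ (List.mem_append_right _ (by simp))
                · exact List.mem_append_right _ hb3
          have hnew := ins_mid hcs3 hadj.symm hz humem3
          refine hlonger k1 _ hnew ?_
          have hA0len := congrArg List.length hA0
          simp only [List.length_append, List.length_cons, List.length_nil] at hA0len
          simp only [List.length_cons, List.length_append, List.length_nil]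
          omega
        have hnub0 : ¬ G.Adj u b0 := by
          intro hadj
          have hcs4 : IsCyc G k1 ((c :: A') ++ k2 :: b0 :: B') := by
            have heq : c :: (A' ++ k2 :: (b0 :: B')) = (c :: A') ++ k2 :: b0 :: B' := by simp
            rw [← heq]; exact hcs
          have humem4 : u ∉ k1 :: ((c :: A') ++ k2 :: b0 :: B') := by
            intro h
            apply humem
            simpa using h
          have hnew := ins_mid hcs4 hz.symm hadj humem4
          refine hlonger k1 _ hnew ?_
          simp only [List.length_cons, List.length_append, List.length_nil]
          omega
        have hKor : lA ∈ K ∨ b0 ∈ K := by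
          by_contra hcon
          push_neg at hcon
          have hlAI : lA ∈ I := (hKI lA).resolve_left hcon.1
          have hb0I : b0 ∈ I := (hKI b0).resolve_left hcon.2
          exact noClaw hclaw hz.symm hlAk2.symm hk2b0 hulA hub0 hlAb0
            hnulA hnub0 (hindep hlAI hb0I)
        have hadjlast : G.Adj ((b0 :: B').getLast (by simp)) c := by
          rw [hxBlast]
          exact hadjxc
        rcases hKor with hlAK | hb0K
        · have hadjlAk1 : G.Adj lA k1 := hKadj lA hlAK k1 hk1K (Ne.symm hk1lA)
          have hnew := surgB hcs (by simp) hadjlAk1 hy.symm hz hadjlast humem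
          refine hlonger c _ hnew ?_
          simp only [List.length_cons, List.length_append, List.length_nil] at hlencyc ⊢
          omega
        · have hadjk1b0 : G.Adj k1 b0 := hKadj k1 hk1K b0 hb0K hk1b0
          have hnew := surgA hcs (by simp) hz.symm hy (by simpa using hadjk1b0)
            hadjlast humem
          refine hlonger c _ hnew ?_
          simp only [List.length_cons, List.length_append, List.length_nil] at hlencyc ⊢
          omega
      obtain ⟨c, mm, x, hs0⟩ := shape_of_two_le hcs0.2.2
      have humem0 : u ∉ k1 :: s0 := fun h => hu (hperm0.mem_iff.1 h)
      have hcs0' : IsCyc G k1 (c :: (mm ++ [x])) := hs0 ▸ hcs0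
      have hcmem : c ∈ s0 := by rw [hs0]; simp
      have hxmem : x ∈ s0 := by rw [hs0]; simp
      have hnc : ¬ G.Adj u c := by
        intro hadj
        have hnew := ins_front hcs0' hy.symm hadj (by rw [← hs0]; exact humem0)
        refine hlonger k1 _ hnew ?_
        rw [← hperm0.length_eq, hs0]
        simp
      have hnx : ¬ G.Adj u x := by
        intro hadj
        have hnew := ins_end hcs0' (by simp)
          (by rw [getLast_shape c x mm]; exact hadj.symm) hy (by rw [← hs0]; exact humem0)
        refine hlonger k1 _ hnew ?_
        rw [← hperm0.length_eq, hs0]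
        simp
      rcases hKI x with hxK | hxI
      · exact hmain s0 hcs0 hperm0 c mm x hs0 hxK hnc hnx
      rcases hKI c with hcK | hcI
      · have hrev := isCyc_reverse hcs0
        have hpermrev : (k1 :: s0.reverse) ~ (a :: t) :=
          ((s0.reverse_perm).cons k1).trans hperm0
        refine hmain s0.reverse hrev hpermrev x mm.reverse c ?_ hcK hnx hnc
        rw [hs0]
        simp
      · have hk1c : G.Adj k1 c := by
          have := hcs0'.1
          rw [List.cons_append, chainCons_iff] at this
          exact this.1
        have hxk1 : G.Adj x k1 := by
          have := chain_last _ _ _ hcs0'.1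
          rwa [show ((k1 :: (c :: (mm ++ [x]))).getLast (by simp)) = x by
            rw [List.getLast_cons (by simp)]; exact getLast_shape c x mm] at this
        have hcx : c ≠ x := by
          have h1 : (c :: (mm ++ [x])).Nodup := (List.nodup_cons.1 hcs0'.2.1).2
          have h2 : c ∉ mm ++ [x] := (List.nodup_cons.1 h1).1
          intro h
          exact h2 (by simp [h])
        have hcu : c ≠ u := by
          intro h
          exact humem0 (List.mem_cons_of_mem k1 (h ▸ hcmem))
        have hxu : x ≠ u := by
          intro h
          exact humem0 (List.mem_cons_of_mem k1 (h ▸ hxmem))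
        exact noClaw hclaw hk1c hxk1.symm hy.symm hcx hcu hxu
          (hindep hcI hxI) (fun h => hnc h.symm) (fun h => hnx h.symm)
    -- conclude
    obtain ⟨p, hp⟩ := isCyc_hamCycle hcyc hspan
    exact ⟨a, p, hp⟩
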